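/- Let A → Ā be a homomorphism of commutative rings, let B be a commutative A-algebra, let B̄ = Ā ⊗_A B, and let J be a B̄-module. Assume Tor_1^A(B, Ā) = 0. Then for every square-zero extension of A-algebras 0 → J → B' → B → 0 (where the kernel, as a B-module, carries the B-module structure obtained from the B̄-module structure of J via B → B̄), there exists a square-zero extension of Ā-algebras 0 → J → B̄' → B̄ → 0 and an A-algebra homomorphism B' → B̄' that restricts to the identity on J and induces the canonical map B → B̄ on quotients. -/

import Mathlib

/-!
STATEMENT 1: If `Tor_1^A(B, Ā) = 0`, every square-zero `A`-algebra extension of `B` by `J`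
(where `J` is a `B̄ = Ā ⊗[A] B`-module, viewed as a `B`-module via `B → B̄`) maps to a
square-zero `Ā`-algebra extension of `B̄` by `J`, compatibly with the canonical maps.
-/

open scoped TensorProduct
open CategoryTheory Limits

attribute [local instance] Algebra.TensorProduct.rightAlgebra

/-- A square-zero extension of the `R`-algebra `B` by the `B`-module `J`:
a surjective `R`-algebra homomorphism `proj : E → B` together with an additive inclusion
`incl : J → E` identifying `J` with the kernel of `proj`, such that
`e * incl j = incl (proj e • j)`; the latter condition encodes both that the kernel has
square zero and that the induced `B`-module structure on the kernel is that of `J`. -/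
structure SqZeroExt (R B J : Type) [CommRing R] [CommRing B] [Algebra R B]
    [AddCommGroup J] [Module B J] where
  E : Type
  [commRing : CommRing E]
  [algebra : Algebra R E]
  proj : E →ₐ[R] B
  proj_surjective : Function.Surjective proj
  incl : J →+ E
  incl_injective : Function.Injective incl
  range_eq_ker : ∀ x : E, proj x = 0 ↔ ∃ j : J, incl j = x
  mul_incl : ∀ (e : E) (j : J), e * incl j = incl (proj e • j)

attribute [instance] SqZeroExt.commRing SqZeroExt.algebra

lemma tensor_chase {A : Type} [CommRing A]
    {Abar B E J P0 P1 P2 : Type}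
    [AddCommGroup Abar] [AddCommGroup B] [AddCommGroup E] [AddCommGroup J]
    [AddCommGroup P0] [AddCommGroup P1] [AddCommGroup P2]
    [Module A Abar] [Module A B] [Module A E] [Module A J]
    [Module A P0] [Module A P1] [Module A P2]
    [Module.Flat A P0]
    (d2 : P2 →ₗ[A] P1) (d1 : P1 →ₗ[A] P0) (ρ : P0 →ₗ[A] Abar)
    (hρ : Function.Surjective ρ) (hex01 : Function.Exact d1 ρ)
    (hd : ∀ t, d1 (d2 t) = 0)
    (hTor : Function.Exact (d2.rTensor B) (d1.rTensor B))
    (ι : J →ₗ[A] E) (p : E →ₗ[A] B) (hι : Function.Injective ι)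
    (hp : Function.Surjective p) (hJE : Function.Exact ι p) :
    Function.Injective (ι.lTensor Abar) := by
  have hpι : p ∘ₗ ι = 0 := by
    ext j
    simpa using hJE.apply_apply_eq_zero j
  have hρd1 : ρ ∘ₗ d1 = 0 := by
    ext t
    simpa using hex01.apply_apply_eq_zero t
  have hd12 : d1 ∘ₗ d2 = 0 := by ext t; simpa using hd t
  rw [← LinearMap.ker_eq_bot]
  rw [Submodule.eq_bot_iff]
  intro x hx
  rw [LinearMap.mem_ker] at hx
  obtain ⟨y, rfl⟩ := LinearMap.rTensor_surjective J hρ x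
  -- y : P0 ⊗ J
  set y' : P0 ⊗[A] E := ι.lTensor P0 y with hy'
  have h1 : ρ.rTensor E y' = 0 := by
    have : ρ.rTensor E (ι.lTensor P0 y) = ι.lTensor Abar (ρ.rTensor J y) := by
      rw [← LinearMap.comp_apply, ← LinearMap.comp_apply,
        LinearMap.rTensor_comp_lTensor, LinearMap.lTensor_comp_rTensor]
    rw [hy', this, hx]
  obtain ⟨z, hz⟩ := (rTensor_exact E hex01 hρ y').mp h1
  have h4 : d1.rTensor B (p.lTensor P1 z) = 0 := by
    have e1 : d1.rTensor B (p.lTensor P1 z) = p.lTensor P0 (d1.rTensor E z) := by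
      rw [← LinearMap.comp_apply, ← LinearMap.comp_apply,
        LinearMap.rTensor_comp_lTensor, LinearMap.lTensor_comp_rTensor]
    rw [e1, hz, hy', ← LinearMap.comp_apply, ← LinearMap.lTensor_comp, hpι,
      LinearMap.lTensor_zero, LinearMap.zero_apply]
  obtain ⟨w, hw⟩ := (hTor (p.lTensor P1 z)).mp h4
  obtain ⟨v, hv⟩ := LinearMap.lTensor_surjective P2 hp w
  set z' : P1 ⊗[A] E := z - d2.rTensor E v with hz'
  have h5 : p.lTensor P1 z' = 0 := by
    have e2 : p.lTensor P1 (d2.rTensor E v) = d2.rTensor B (p.lTensor P2 v) := by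
      rw [← LinearMap.comp_apply, ← LinearMap.comp_apply,
        LinearMap.rTensor_comp_lTensor, LinearMap.lTensor_comp_rTensor]
    rw [hz', map_sub, e2, hv, hw, sub_self]
  obtain ⟨u, hu⟩ := (lTensor_exact P1 hJE hp z').mp h5
  have h6 : ι.lTensor P0 (y - d1.rTensor J u) = 0 := by
    have e3 : ι.lTensor P0 (d1.rTensor J u) = d1.rTensor E (ι.lTensor P1 u) := by
      rw [← LinearMap.comp_apply, ← LinearMap.comp_apply,
        LinearMap.rTensor_comp_lTensor, LinearMap.lTensor_comp_rTensor]
    have e4 : d1.rTensor E z' = y' := by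
      rw [hz', map_sub, hz, ← LinearMap.comp_apply, ← LinearMap.rTensor_comp, hd12,
        LinearMap.rTensor_zero, LinearMap.zero_apply, sub_zero]
    rw [map_sub, e3, hu, e4, sub_self]
  have h7 : y - d1.rTensor J u = 0 := by
    have hinj : Function.Injective (ι.lTensor P0) :=
      Module.Flat.lTensor_preserves_injective_linearMap ι hι
    exact hinj (by rw [h6, map_zero])
  have : y = d1.rTensor J u := by rwa [sub_eq_zero] at h7
  rw [this, ← LinearMap.comp_apply, ← LinearMap.rTensor_comp, hρd1,
    LinearMap.rTensor_zero, LinearMap.zero_apply]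

lemma tor_extract (A : Type) [CommRing A] (B Abar : Type) [AddCommGroup B] [Module A B]
    [AddCommGroup Abar] [Module A Abar]
    (htor : IsZero (((Tor (ModuleCat A) 1).obj (ModuleCat.of A B)).obj (ModuleCat.of A Abar))) :
    ∃ (P0 P1 P2 : ModuleCat.{0} A) (d2 : ↑P2 →ₗ[A] ↑P1) (d1 : ↑P1 →ₗ[A] ↑P0) (ρ : ↑P0 →ₗ[A] Abar),
      Module.Flat A P0 ∧ Function.Surjective ρ ∧ Function.Exact d1 ρ ∧ (∀ t, d1 (d2 t) = 0) ∧
      Function.Exact (d2.rTensor B) (d1.rTensor B) := by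
  have P := (HasProjectiveResolution.out (Z := ModuleCat.of A Abar)).some
  set F := (MonoidalCategory.tensoringLeft (ModuleCat A)).obj (ModuleCat.of A B) with hF
  set K := (F.mapHomologicalComplex (ComplexShape.down ℕ)).obj P.complex with hK
  have hzero : IsZero (K.homology 1) := by
    refine IsZero.of_iso ?_ (P.isoLeftDerivedObj F 1).symm
    exact htor
  have hexact : K.ExactAt 1 :=
    (HomologicalComplex.exactAt_iff_isZero_homology _ _).mpr hzero
  rw [HomologicalComplex.exactAt_iff' _ 2 1 0 (by simp) (by simp)] at hexact
  rw [ShortComplex.moduleCat_exact_iff] at hexact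
  -- the iso from the degree-0 part of single₀ to Abar
  set e := (HomologicalComplex.singleObjXSelf (ComplexShape.down ℕ) 0
    (ModuleCat.of A Abar)).hom with he
  have hebij : Function.Bijective e := by
    have : ⇑e = ⇑((HomologicalComplex.singleObjXSelf (ComplexShape.down ℕ) 0
      (ModuleCat.of A Abar)).toLinearEquiv) := rfl
    rw [this]
    exact (HomologicalComplex.singleObjXSelf (ComplexShape.down ℕ) 0
      (ModuleCat.of A Abar)).toLinearEquiv.bijective
  refine ⟨P.complex.X 0, P.complex.X 1, P.complex.X 2,
    (P.complex.d 2 1).hom, (P.complex.d 1 0).hom, e.hom ∘ₗ (P.π.f 0).hom,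
    ?_, ?_, ?_, ?_, ?_⟩
  · -- flatness of P0
    haveI : Module.Projective A ↑(P.complex.X 0) := by
      rw [IsProjective.iff_projective]
      exact P.projective 0
    infer_instance
  · -- surjectivity of ρ
    exact hebij.surjective.comp ((ModuleCat.epi_iff_surjective (P.π.f 0)).mp inferInstance)
  · -- exactness at P0
    have hS : (ShortComplex.mk (P.complex.d 1 0) (P.π.f 0)
        P.complex_d_comp_π_f_zero).Exact :=
      ShortComplex.exact_of_g_is_cokernel _ P.isColimitCokernelCofork
    rw [ShortComplex.moduleCat_exact_iff] at hS
    intro x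
    constructor
    · intro hx
      have : P.π.f 0 x = 0 := by
        apply hebij.injective
        rw [map_zero]; exact hx
      obtain ⟨y, hy⟩ := hS x this
      exact ⟨y, hy⟩
    · rintro ⟨y, rfl⟩
      have : (P.π.f 0).hom ((P.complex.d 1 0).hom y) = 0 := by
        exact ConcreteCategory.congr_hom P.complex_d_comp_π_f_zero y
      simp only [LinearMap.comp_apply, this, map_zero]
  · -- d1 ∘ d2 = 0
    intro t
    exact ConcreteCategory.congr_hom (P.complex.d_comp_d 2 1 0) t
  · -- Tor exactness
    rw [LinearMap.rTensor_exact_iff_lTensor_exact]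
    have hd21 : ⇑(K.d 2 1) = ⇑(LinearMap.lTensor B (P.complex.d 2 1).hom) := rfl
    have hd10 : ⇑(K.d 1 0) = ⇑(LinearMap.lTensor B (P.complex.d 1 0).hom) := rfl
    intro x
    constructor
    · intro hx
      obtain ⟨y, hy⟩ := hexact x (by rw [← hd10] at hx; exact hx)
      exact ⟨y, by rw [← hd21]; exact hy⟩
    · rintro ⟨y, rfl⟩
      rw [← hd10, ← hd21]
      exact ConcreteCategory.congr_hom (K.d_comp_d 2 1 0) y

set_option maxHeartbeats 2000000 in
set_option synthInstance.maxHeartbeats 400000 in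
theorem sqZeroExt_baseChange_exists
    (A Abar B : Type) [CommRing A] [CommRing Abar] [CommRing B]
    [Algebra A Abar] [Algebra A B]
    (J : Type) [AddCommGroup J]
    [Module B J] [Module (Abar ⊗[A] B) J]
    [IsScalarTower B (Abar ⊗[A] B) J]
    (htor : IsZero (((Tor (ModuleCat A) 1).obj (ModuleCat.of A B)).obj (ModuleCat.of A Abar)))
    (ext : SqZeroExt A B J) :
    ∃ (extBar : SqZeroExt Abar (Abar ⊗[A] B) J) (g : ext.E →+* extBar.E),
      (∀ a : A, g (algebraMap A ext.E a) =
        algebraMap Abar extBar.E (algebraMap A Abar a)) ∧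
      (∀ x : ext.E, extBar.proj (g x) = algebraMap B (Abar ⊗[A] B) (ext.proj x)) ∧
      (∀ j : J, g (ext.incl j) = extBar.incl j) := by
  classical
  -- A-module structure on J via B
  letI : Module A J := Module.compHom J (algebraMap A B)
  have smulAJ : ∀ (a : A) (j : J), a • j = (algebraMap A B a) • j := fun _ _ => rfl
  -- bridging smul lemma
  have smulBJ : ∀ (b : B) (j : J), b • j = (((1 : Abar) ⊗ₜ[A] b : Abar ⊗[A] B)) • j := by
    intro b j
    have h1 : b • j = b • ((1 : Abar ⊗[A] B) • j) := by rw [one_smul]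
    rw [h1, ← smul_assoc, Algebra.smul_def, mul_one]
    rfl
  -- incl as an A-linear map
  let iotaL : J →ₗ[A] ext.E :=
    { toFun := ext.incl
      map_add' := fun x y => by simp
      map_smul' := by
        intro a j
        have : (a : A) • ext.incl j = algebraMap A ext.E a * ext.incl j :=
          Algebra.smul_def a (ext.incl j)
        rw [RingHom.id_apply, this, ext.mul_incl, AlgHom.commutes, smulAJ] }
  let projL : ext.E →ₗ[A] B := ext.proj.toLinearMap
  have hJE : Function.Exact iotaL projL := by
    intro e
    constructor
    · intro h
      obtain ⟨j, hj⟩ := (ext.range_eq_ker e).mp h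
      exact ⟨j, hj⟩
    · rintro ⟨j, rfl⟩
      exact (ext.range_eq_ker _).mpr ⟨j, rfl⟩
  -- the Tor input: injectivity of lTensor
  have hinj : Function.Injective (iotaL.lTensor Abar) := by
    obtain ⟨P0, P1, P2, d2, d1, ρ, hflat, hρ, hex01, hd, hTor⟩ := tor_extract A B Abar htor
    exact tensor_chase d2 d1 ρ hρ hex01 hd hTor iotaL projL
      ext.incl_injective ext.proj_surjective hJE
  -- base-changed objects
  set Eb := Abar ⊗[A] ext.E with hEb
  set Bb := Abar ⊗[A] B with hBb
  set Jb := Abar ⊗[A] J with hJb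
  let πA : Eb →ₐ[Abar] Bb := Algebra.TensorProduct.map (AlgHom.id Abar Abar) ext.proj
  let iT : Jb →ₗ[A] Eb := iotaL.lTensor Abar
  have hπ : ∀ x : Eb, πA x = projL.lTensor Abar x := by
    intro x
    induction x using TensorProduct.induction_on with
    | zero => simp
    | tmul a e => simp [πA, Algebra.TensorProduct.map_tmul]; rfl
    | add x y hx hy => rw [map_add, map_add, hx, hy]
  have hπι : ∀ t : Jb, πA (iT t) = 0 := by
    intro t
    rw [hπ]
    show (projL.lTensor Abar) ((iotaL.lTensor Abar) t) = 0
    rw [← LinearMap.comp_apply, ← LinearMap.lTensor_comp]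
    have h0 : projL ∘ₗ iotaL = 0 := by
      ext j; simpa using hJE.apply_apply_eq_zero j
    rw [h0, LinearMap.lTensor_zero, LinearMap.zero_apply]
  have hπsurj : Function.Surjective πA := by
    have : ⇑πA = ⇑(projL.lTensor Abar) := funext hπ
    rw [this]
    exact LinearMap.lTensor_surjective Abar ext.proj_surjective
  have hexEb : Function.Exact iT (projL.lTensor Abar) :=
    lTensor_exact Abar hJE ext.proj_surjective
  -- the A-bilinear map underlying φ
  have smulABbJ : ∀ (c : A) (y : J), (algebraMap A Bb c) • y = c • y := by
    intro c y
    rw [smulAJ, smulBJ, IsScalarTower.algebraMap_apply A B Bb]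
    rfl
  let φ0 : Abar →ₗ[A] J →ₗ[A] J := LinearMap.mk₂ A
    (fun a j => ((a ⊗ₜ[A] (1:B) : Bb)) • j)
    (fun a a' j => by rw [TensorProduct.add_tmul, add_smul])
    (fun c a j => by
      calc ((c • a) ⊗ₜ[A] (1:B) : Bb) • j
          = (c • (a ⊗ₜ[A] (1:B) : Bb)) • j := by rw [TensorProduct.smul_tmul']
        _ = (algebraMap A Bb c * (a ⊗ₜ[A] (1:B))) • j := by rw [Algebra.smul_def]
        _ = algebraMap A Bb c • ((a ⊗ₜ[A] (1:B) : Bb) • j) := mul_smul _ _ _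
        _ = c • ((a ⊗ₜ[A] (1:B) : Bb) • j) := smulABbJ c _)
    (fun a j j' => by rw [smul_add])
    (fun c a j => by
      calc (a ⊗ₜ[A] (1:B) : Bb) • (c • j)
          = (a ⊗ₜ[A] (1:B)) • (((1:Abar) ⊗ₜ[A] algebraMap A B c : Bb) • j) := by
            rw [smulAJ, smulBJ]
        _ = ((a ⊗ₜ[A] (1:B)) * ((1:Abar) ⊗ₜ[A] algebraMap A B c)) • j := (mul_smul _ _ _).symm
        _ = (((1:Abar) ⊗ₜ[A] algebraMap A B c) * (a ⊗ₜ[A] (1:B))) • j := by rw [mul_comm]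
        _ = ((1:Abar) ⊗ₜ[A] algebraMap A B c : Bb) • ((a ⊗ₜ[A] (1:B) : Bb) • j) := mul_smul _ _ _
        _ = c • ((a ⊗ₜ[A] (1:B) : Bb) • j) := by rw [← smulBJ, ← smulAJ])
  let φJ : Jb →ₗ[A] J := TensorProduct.lift φ0
  have φtmul : ∀ (a : Abar) (j : J), φJ (a ⊗ₜ[A] j) = ((a ⊗ₜ[A] (1:B) : Bb)) • j :=
    fun a j => rfl
  -- key multiplicative compatibility
  have key : ∀ (x : Eb) (t : Jb), ∃ t' : Jb, iT t' = x * iT t ∧ φJ t' = πA x • φJ t := by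
    intro x t
    induction x using TensorProduct.induction_on with
    | zero => exact ⟨0, by simp, by simp⟩
    | tmul a e =>
      induction t using TensorProduct.induction_on with
      | zero => exact ⟨0, by simp, by simp⟩
      | tmul c j =>
        refine ⟨(a * c) ⊗ₜ[A] (ext.proj e • j), ?_, ?_⟩
        · show (a * c) ⊗ₜ[A] (iotaL (ext.proj e • j)) = (a ⊗ₜ[A] e) * ((c : Abar) ⊗ₜ[A] iotaL j)
          rw [Algebra.TensorProduct.tmul_mul_tmul]
          congr 1
          exact (ext.mul_incl e j).symm
        · rw [φtmul, φtmul, Algebra.TensorProduct.map_tmul]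
          rw [smulBJ (ext.proj e) j, ← mul_smul, ← mul_smul,
            Algebra.TensorProduct.tmul_mul_tmul, Algebra.TensorProduct.tmul_mul_tmul]
          simp only [AlgHom.coe_id, id_eq, one_mul, mul_one]
      | add t1 t2 h1 h2 =>
        obtain ⟨s1, i1, p1⟩ := h1
        obtain ⟨s2, i2, p2⟩ := h2
        exact ⟨s1 + s2, by rw [map_add, i1, i2, map_add, mul_add],
          by rw [map_add, p1, p2, map_add, smul_add]⟩
    | add x1 x2 h1 h2 =>
      obtain ⟨s1, i1, p1⟩ := h1
      obtain ⟨s2, i2, p2⟩ := h2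
      exact ⟨s1 + s2, by rw [map_add, i1, i2, add_mul],
        by rw [map_add, p1, p2, map_add, add_smul]⟩
  -- module structures for the trivial square-zero extension
  letI modEbJ : Module Eb J := Module.compHom J πA.toRingHom
  have smulEbJ : ∀ (x : Eb) (j : J), x • j = πA x • j := fun _ _ => rfl
  letI modEbopJ : Module Ebᵐᵒᵖ J :=
    Module.compHom J (πA.toRingHom.fromOpposite fun x y => mul_comm _ _)
  have smulEbopJ : ∀ (x : Ebᵐᵒᵖ) (j : J), x • j = πA x.unop • j := fun _ _ => rfl
  letI : IsCentralScalar Eb J := ⟨fun r m => rfl⟩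
  letI : SMulCommClass Eb Ebᵐᵒᵖ J := ⟨fun r s m => by
    show πA r • (πA s.unop • m) = πA s.unop • (πA r • m)
    rw [← mul_smul, ← mul_smul, mul_comm]⟩
  letI modAbarJ : Module Abar J := Module.compHom J (algebraMap Abar Bb)
  have smulAbarJ : ∀ (a : Abar) (j : J), a • j = (algebraMap Abar Bb a) • j := fun _ _ => rfl
  letI : IsScalarTower Abar Eb J := ⟨fun a x j => by
    show πA (a • x) • j = algebraMap Abar Bb a • (πA x • j)
    rw [map_smul, Algebra.smul_def, mul_smul]⟩
  letI : IsScalarTower Abar Ebᵐᵒᵖ J := ⟨fun a s j => by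
    show πA ((a • s).unop) • j = algebraMap Abar Bb a • (πA s.unop • j)
    rw [MulOpposite.unop_smul, map_smul, Algebra.smul_def, mul_smul]⟩
  letI : Algebra Abar (TrivSqZeroExt Eb J) := TrivSqZeroExt.algebra' Abar Eb J
  -- the ideal
  let N : Ideal (TrivSqZeroExt Eb J) :=
    { carrier := {z | ∃ t : Jb, iT t = z.fst ∧ φJ t = - z.snd}
      add_mem' := by
        rintro z w ⟨t, ht1, ht2⟩ ⟨s, hs1, hs2⟩
        exact ⟨t + s, by rw [map_add, ht1, hs1]; rfl,
          by rw [map_add, ht2, hs2, TrivSqZeroExt.snd_add, neg_add]⟩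
      zero_mem' := ⟨0, by rw [map_zero]; rfl, by rw [map_zero, TrivSqZeroExt.snd_zero, neg_zero]⟩
      smul_mem' := by
        rintro c z ⟨t, ht1, ht2⟩
        obtain ⟨t', k1, k2⟩ := key c.fst t
        refine ⟨t', ?_, ?_⟩
        · rw [smul_eq_mul, TrivSqZeroExt.fst_mul, k1, ht1]
        · rw [smul_eq_mul, TrivSqZeroExt.snd_mul, k2, ht2]
          have hz0 : (MulOpposite.op z.fst) • c.snd = (0:J) := by
            rw [smulEbopJ]
            show πA z.fst • c.snd = 0
            rw [← ht1, hπι, zero_smul]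
          rw [smulEbJ c.fst z.snd, hz0, add_zero, smul_neg]
      }
  have memN : ∀ z : TrivSqZeroExt Eb J, z ∈ N ↔ ∃ t : Jb, iT t = z.fst ∧ φJ t = - z.snd :=
    fun z => Iff.rfl
  -- the quotient ring
  letI : Algebra Abar ((TrivSqZeroExt Eb J) ⧸ N) := Ideal.Quotient.algebra Abar
  let mkq : TrivSqZeroExt Eb J →ₐ[Abar] (TrivSqZeroExt Eb J) ⧸ N := Ideal.Quotient.mkₐ Abar N
  let ψ : TrivSqZeroExt Eb J →ₐ[Abar] Bb := πA.comp (TrivSqZeroExt.fstHom Abar Eb J)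
  have hψ : ∀ z : TrivSqZeroExt Eb J, ψ z = πA z.fst := fun z => rfl
  have hψN : ∀ z ∈ N, ψ z = 0 := by
    rintro z ⟨t, ht1, ht2⟩
    rw [hψ, ← ht1, hπι]
  let projQ : ((TrivSqZeroExt Eb J) ⧸ N) →ₐ[Abar] Bb := Ideal.Quotient.liftₐ N ψ hψN
  have projQ_mk : ∀ z : TrivSqZeroExt Eb J, projQ (mkq z) = πA z.fst := by
    intro z
    show projQ (Ideal.Quotient.mkₐ Abar N z) = πA z.fst
    rw [Ideal.Quotient.mkₐ_eq_mk]
    rw [Ideal.Quotient.liftₐ_apply]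
    exact Ideal.Quotient.lift_mk N _ _
  have hmksurj : Function.Surjective mkq := Ideal.Quotient.mkₐ_surjective Abar N
  let inclQ : J →+ ((TrivSqZeroExt Eb J) ⧸ N) :=
    { toFun := fun j => mkq (TrivSqZeroExt.inr j)
      map_zero' := by
        show mkq (TrivSqZeroExt.inr (0:J)) = 0
        rw [TrivSqZeroExt.inr_zero, map_zero]
      map_add' := fun j j' => by
        show mkq (TrivSqZeroExt.inr (j + j')) = mkq (TrivSqZeroExt.inr j) + mkq (TrivSqZeroExt.inr j')
        rw [TrivSqZeroExt.inr_add, map_add] }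
  have mk_eq : ∀ z w : TrivSqZeroExt Eb J, mkq z = mkq w ↔ z - w ∈ N := by
    intro z w
    show Ideal.Quotient.mk N z = Ideal.Quotient.mk N w ↔ _
    exact Ideal.Quotient.eq
  refine ⟨⟨(TrivSqZeroExt Eb J) ⧸ N, projQ, ?_, inclQ, ?_, ?_, ?_⟩,
    (mkq.toRingHom).comp ((TrivSqZeroExt.inlHom Eb J).comp
      (Algebra.TensorProduct.includeRight : ext.E →ₐ[A] Eb).toRingHom), ?_, ?_, ?_⟩
  · -- surjectivity of projQ
    intro y
    obtain ⟨x, hx⟩ := hπsurj y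
    exact ⟨mkq (TrivSqZeroExt.inl x), by rw [projQ_mk, TrivSqZeroExt.fst_inl, hx]⟩
  · -- injectivity of inclQ
    intro j j' h
    have : TrivSqZeroExt.inr j - TrivSqZeroExt.inr j' ∈ N := (mk_eq _ _).mp h
    obtain ⟨t, ht1, ht2⟩ := this
    have hfst : TrivSqZeroExt.fst (TrivSqZeroExt.inr (R := Eb) j - TrivSqZeroExt.inr j') = (0 : Eb) := by
      rw [TrivSqZeroExt.fst_sub, TrivSqZeroExt.fst_inr, TrivSqZeroExt.fst_inr, sub_zero]
    rw [hfst] at ht1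
    have ht0 : t = 0 := hinj (by rw [ht1, map_zero])
    rw [ht0, map_zero] at ht2
    have : TrivSqZeroExt.snd (TrivSqZeroExt.inr (R := Eb) j - TrivSqZeroExt.inr j') = 0 := by
      rw [← neg_eq_zero, ← ht2]
    rw [TrivSqZeroExt.snd_sub, TrivSqZeroExt.snd_inr, TrivSqZeroExt.snd_inr, sub_eq_zero] at this
    exact this
  · -- range_eq_ker
    intro x
    obtain ⟨z, rfl⟩ := hmksurj x
    constructor
    · intro hx
      rw [projQ_mk] at hx
      have : (projL.lTensor Abar) z.fst = 0 := by rw [← hπ, hx]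
      obtain ⟨t, ht⟩ := (hexEb z.fst).mp this
      refine ⟨z.snd + φJ t, ?_⟩
      show mkq (TrivSqZeroExt.inr (z.snd + φJ t)) = mkq z
      rw [mk_eq]
      refine ⟨-t, ?_, ?_⟩
      · rw [map_neg, ht, TrivSqZeroExt.fst_sub, TrivSqZeroExt.fst_inr, zero_sub]
      · rw [map_neg, TrivSqZeroExt.snd_sub, TrivSqZeroExt.snd_inr]
        abel
    · rintro ⟨j, hj⟩
      rw [← hj]
      show projQ (mkq (TrivSqZeroExt.inr j)) = 0
      rw [projQ_mk, TrivSqZeroExt.fst_inr, map_zero]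
  · -- mul_incl
    intro e j
    obtain ⟨z, rfl⟩ := hmksurj e
    show mkq z * mkq (TrivSqZeroExt.inr j) = inclQ (projQ (mkq z) • j)
    rw [← map_mul]
    have hz : z * TrivSqZeroExt.inr j = TrivSqZeroExt.inr (πA z.fst • j) := by
      refine TrivSqZeroExt.ext ?_ ?_
      · rw [TrivSqZeroExt.fst_mul, TrivSqZeroExt.fst_inr, mul_zero, TrivSqZeroExt.fst_inr]
      · rw [TrivSqZeroExt.snd_mul, TrivSqZeroExt.snd_inr, TrivSqZeroExt.fst_inr,
          TrivSqZeroExt.snd_inr, MulOpposite.op_zero, zero_smul, add_zero, smulEbJ]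
    rw [hz, projQ_mk]
    rfl
  · -- compatibility with algebraMap A
    intro a
    show mkq (TrivSqZeroExt.inl ((1:Abar) ⊗ₜ[A] (algebraMap A ext.E a))) =
      algebraMap Abar _ (algebraMap A Abar a)
    rw [← mkq.commutes (algebraMap A Abar a)]
    congr 1
    rw [TrivSqZeroExt.algebraMap_eq_inl']
    congr 1
    rw [← IsScalarTower.algebraMap_apply A Abar Eb,
      IsScalarTower.algebraMap_apply A ext.E Eb]
    rfl
  · -- compatibility with proj
    intro x
    show projQ (mkq (TrivSqZeroExt.inl ((1:Abar) ⊗ₜ[A] x))) = algebraMap B Bb (ext.proj x)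
    rw [projQ_mk, TrivSqZeroExt.fst_inl]
    show πA ((1:Abar) ⊗ₜ[A] x) = _
    rw [Algebra.TensorProduct.map_tmul]
    rfl
  · -- compatibility with incl
    intro j
    show mkq (TrivSqZeroExt.inl ((1:Abar) ⊗ₜ[A] (ext.incl j))) = mkq (TrivSqZeroExt.inr j)
    rw [mk_eq]
    refine ⟨(1:Abar) ⊗ₜ[A] j, ?_, ?_⟩
    · rw [TrivSqZeroExt.fst_sub, TrivSqZeroExt.fst_inl, TrivSqZeroExt.fst_inr, sub_zero]
      rfl
    · rw [TrivSqZeroExt.snd_sub, TrivSqZeroExt.snd_inl, TrivSqZeroExt.snd_inr, zero_sub,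
        neg_neg, φtmul]
      rw [show ((1:Abar) ⊗ₜ[A] (1:B) : Bb) = 1 from rfl, one_smul]
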